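/- Let s ≥ 3 and let H be a finite simple graph with at least s vertices such that (i) H contains exactly t distinct copies of K_s (distinct s-vertex subsets inducing complete subgraphs), and (ii) there exists an edge e of H such that H − e contains no copy of K_s. Then t ≤ ∏_{j=0}^{s-3} ⌈(|V(H)| − 2 − j)/(s-2)⌉. -/

import Mathlib

open Finset

attribute [local instance] Classical.propDecidable

/-- The Turán-type product `∏_{j<r} ⌈(m-j)/r⌉` (with natural subtraction). -/
def Fprod (r m : ℕ) : ℕ := ∏ j ∈ Finset.range r, (m - j + (r - 1)) / r

lemma Fprod_mono (r : ℕ) {m m' : ℕ} (h : m ≤ m') : Fprod r m ≤ Fprod r m' := by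
  refine Finset.prod_le_prod (fun _ _ => Nat.zero_le _) (fun j _ => ?_)
  exact Nat.div_le_div_right (Nat.add_le_add_right (Nat.sub_le_sub_right h j) _)

lemma Fprod_val {r q s : ℕ} (hr : 0 < r) (hs : s < r) :
    Fprod r (r * q + s) = (q + 1) ^ s * q ^ (r - s) := by
  unfold Fprod
  rw [← Finset.prod_range_mul_prod_Ico _ hs.le]
  have h1 : ∀ j ∈ Finset.range s, (r * q + s - j + (r - 1)) / r = q + 1 := by
    intro j hj
    rw [Finset.mem_range] at hj
    have he : r * q + s - j + (r - 1) = (s - j + (r - 1)) + r * q := by omega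
    have hx : (s - j + (r - 1)) / r = 1 := Nat.div_eq_of_lt_le (by omega) (by omega)
    rw [he, Nat.add_mul_div_left _ _ hr, hx]
    omega
  have h2 : ∀ j ∈ Finset.Ico s r, (r * q + s - j + (r - 1)) / r = q := by
    intro j hj
    rw [Finset.mem_Ico] at hj
    rcases Nat.eq_zero_or_pos q with hq | hq
    · subst hq
      have he : r * 0 + s - j + (r - 1) = r - 1 := by omega
      rw [he, Nat.div_eq_of_lt (by omega)]
    · have hrP : r ≤ r * q := Nat.le_mul_of_pos_right r hq
      have he : r * q + s - j + (r - 1) = (s + (r - 1) - j) + r * q := by omega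
      rw [he, Nat.add_mul_div_left _ _ hr, Nat.div_eq_of_lt (by omega), Nat.zero_add]
  rw [Finset.prod_congr rfl h1, Finset.prod_congr rfl h2, Finset.prod_const,
    Finset.prod_const, Finset.card_range, Nat.card_Ico]

lemma ite_sum (r s q : ℕ) (hsr : s ≤ r) :
    ∑ j ∈ Finset.range r, (if j < s then q + 1 else q) = r * q + s := by
  rw [← Finset.sum_range_add_sum_Ico _ hsr]
  have h1 : ∀ j ∈ Finset.range s, (if j < s then q + 1 else q) = q + 1 := by
    intro j hj; rw [Finset.mem_range] at hj; simp [hj]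
  have h2 : ∀ j ∈ Finset.Ico s r, (if j < s then q + 1 else q) = q := by
    intro j hj; rw [Finset.mem_Ico] at hj; simp [Nat.not_lt.mpr hj.1]
  rw [Finset.sum_congr rfl h1, Finset.sum_congr rfl h2, Finset.sum_const,
    Finset.sum_const, Finset.card_range, Nat.card_Ico, smul_eq_mul, smul_eq_mul]
  obtain ⟨k, rfl⟩ := Nat.exists_eq_add_of_le hsr
  rw [Nat.add_sub_cancel_left]; ring

lemma ite_prod (r s q : ℕ) (hsr : s ≤ r) :
    ∏ j ∈ Finset.range r, (if j < s then q + 1 else q) = (q + 1) ^ s * q ^ (r - s) := by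
  rw [← Finset.prod_range_mul_prod_Ico _ hsr]
  have h1 : ∀ j ∈ Finset.range s, (if j < s then q + 1 else q) = q + 1 := by
    intro j hj; rw [Finset.mem_range] at hj; simp [hj]
  have h2 : ∀ j ∈ Finset.Ico s r, (if j < s then q + 1 else q) = q := by
    intro j hj; rw [Finset.mem_Ico] at hj; simp [Nat.not_lt.mpr hj.1]
  rw [Finset.prod_congr rfl h1, Finset.prod_congr rfl h2, Finset.prod_const,
    Finset.prod_const, Finset.card_range, Nat.card_Ico]

/-- A balanced vector achieves (hence is bounded by) the Turán product. -/
lemma balanced_bound {r : ℕ} (v : Fin r → ℕ) (hb : ∀ i j, v i ≤ v j + 1) :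
    ∏ i, v i ≤ Fprod r (∑ i, v i) := by
  rcases Nat.eq_zero_or_pos r with hr | hr
  · subst hr; simp [Fprod]
  · have hne : (Finset.univ : Finset (Fin r)).Nonempty := ⟨⟨0, hr⟩, Finset.mem_univ _⟩
    obtain ⟨i₀, -, hmin⟩ := Finset.exists_min_image Finset.univ v hne
    set q := v i₀ with hq
    have hval : ∀ i, v i = q ∨ v i = q + 1 := by
      intro i
      have h1 : q ≤ v i := hmin i (Finset.mem_univ i)
      have h2 : v i ≤ q + 1 := hb i i₀
      omega
    set A := Finset.univ.filter (fun i => v i = q + 1) with hA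
    set s := A.card with hs
    have hsle : s ≤ r := by
      rw [hs]
      calc A.card ≤ (Finset.univ : Finset (Fin r)).card := Finset.card_le_card (Finset.filter_subset _ _)
        _ = r := by simp
    have hsr : s < r := by
      rcases eq_or_lt_of_le hsle with h | h
      · exfalso
        have hAuniv : A = Finset.univ := Finset.eq_univ_of_card A (by rw [← hs, h, Fintype.card_fin])
        have : i₀ ∈ A := hAuniv ▸ Finset.mem_univ i₀
        rw [hA, Finset.mem_filter] at this
        omega
      · exact h
    have hcardnot : (Finset.univ.filter (fun i => ¬ v i = q + 1)).card = r - s := by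
      have h := Finset.card_filter_add_card_filter_not
        (s := (Finset.univ : Finset (Fin r))) (p := fun i => v i = q + 1)
      simp only [Finset.card_univ, Fintype.card_fin] at h
      rw [← hA] at h
      omega
    have hsum : ∑ i, v i = r * q + s := by
      rw [← Finset.sum_filter_add_sum_filter_not Finset.univ (fun i => v i = q + 1)]
      have hq2 : ∀ i ∈ Finset.univ.filter (fun i => ¬ v i = q + 1), v i = q := by
        intro i hi
        have h1 := hval i
        have h2 := (Finset.mem_filter.mp hi).2
        omega
      have e1 : ∑ i ∈ Finset.univ.filter (fun i => v i = q + 1), v i = s * (q + 1) := by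
        rw [Finset.sum_congr rfl (fun i hi => (Finset.mem_filter.mp hi).2), Finset.sum_const,
          smul_eq_mul, ← hA, ← hs]
      have e2 : ∑ i ∈ Finset.univ.filter (fun i => ¬ v i = q + 1), v i = (r - s) * q := by
        rw [Finset.sum_congr rfl hq2, Finset.sum_const, smul_eq_mul, hcardnot]
      rw [e1, e2]
      obtain ⟨k, hk⟩ := Nat.exists_eq_add_of_le hsle
      rw [hk, Nat.add_sub_cancel_left]; ring
    have hprod : ∏ i, v i = (q + 1) ^ s * q ^ (r - s) := by
      rw [← Finset.prod_filter_mul_prod_filter_not Finset.univ (fun i => v i = q + 1)]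
      have hq2 : ∀ i ∈ Finset.univ.filter (fun i => ¬ v i = q + 1), v i = q := by
        intro i hi
        have h1 := hval i
        have h2 := (Finset.mem_filter.mp hi).2
        omega
      have e1 : ∏ i ∈ Finset.univ.filter (fun i => v i = q + 1), v i = (q + 1) ^ s := by
        rw [Finset.prod_congr rfl (fun i hi => (Finset.mem_filter.mp hi).2), Finset.prod_const,
          ← hA, ← hs]
      have e2 : ∏ i ∈ Finset.univ.filter (fun i => ¬ v i = q + 1), v i = q ^ (r - s) := by
        rw [Finset.prod_congr rfl hq2, Finset.prod_const, hcardnot]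
      rw [e1, e2]
    rw [hsum, hprod, Fprod_val hr hsr]

/-- Any composition's product is bounded by the Turán product (smoothing argument). -/
lemma compBound : ∀ (N : ℕ) {r : ℕ} (v : Fin r → ℕ), (∑ i, v i * v i) ≤ N →
    ∏ i, v i ≤ Fprod r (∑ i, v i) := by
  intro N
  induction N with
  | zero =>
    intro r v hv
    have hz : ∀ i, v i = 0 := by
      intro i
      have h1 : v i * v i ≤ ∑ j, v j * v j :=
        Finset.single_le_sum (f := fun j => v j * v j) (fun j _ => Nat.zero_le _)
          (Finset.mem_univ i)
      have h2 : v i * v i = 0 := by omega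
      exact (Nat.mul_eq_zero.mp h2).elim (fun h => h) (fun h => h)
    exact balanced_bound v (fun i j => by rw [hz i, hz j]; omega)
  | succ N ih =>
    intro r v hv
    by_cases hb : ∀ i j, v i ≤ v j + 1
    · exact balanced_bound v hb
    · push_neg at hb
      obtain ⟨i, j, hij⟩ := hb
      have hne : i ≠ j := by intro h; rw [h] at hij; omega
      set a := v i - 1 with ha
      set b := v j + 1 with hbb
      set v' := Function.update (Function.update v i a) j b with hv'
      have hij' : i ∈ Finset.univ \ {j} := by simp [hne]
      -- sum decomposition
      have hsum' : ∑ k, v' k = ∑ k, v k := by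
        rw [hv', Finset.sum_update_of_mem (Finset.mem_univ j),
          Finset.sum_update_of_mem hij',
          Finset.sum_eq_sum_sdiff_singleton_add (Finset.mem_univ j) v,
          Finset.sum_eq_sum_sdiff_singleton_add hij' v]
        omega
      -- product comparison
      have hprod' : ∏ k, v k ≤ ∏ k, v' k := by
        rw [hv', Finset.prod_update_of_mem (Finset.mem_univ j),
          Finset.prod_update_of_mem hij',
          Finset.prod_eq_prod_diff_singleton_mul (Finset.mem_univ j) v,
          Finset.prod_eq_prod_diff_singleton_mul hij' v]
        obtain ⟨k, hk⟩ : ∃ k, v i = v j + 2 + k := ⟨v i - v j - 2, by omega⟩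
        have ha' : a = v j + 1 + k := by omega
        have hb' : b = v j + 1 := rfl
        rw [ha', hb', hk]
        set P := ∏ x ∈ (Finset.univ \ {j}) \ {i}, v x
        have : (v j + 2 + k) * (v j) ≤ (v j + 1 + k) * (v j + 1) := by nlinarith
        calc P * (v j + 2 + k) * (v j) = P * ((v j + 2 + k) * (v j)) := by ring
          _ ≤ P * ((v j + 1 + k) * (v j + 1)) := Nat.mul_le_mul_left P this
          _ = (v j + 1) * ((v j + 1 + k) * P) := by ring
      -- measure decrease
      have hsq : (fun k => v' k * v' k) =
          Function.update (Function.update (fun k => v k * v k) i (a * a)) j (b * b) := by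
        funext k
        rcases eq_or_ne k j with rfl | hkj
        · simp [hv', Function.update_self]
        · rcases eq_or_ne k i with rfl | hki
          · simp [hv', Function.update_of_ne hkj, Function.update_self, Function.update_of_ne hne]
          · simp [hv', Function.update_of_ne hkj, Function.update_of_ne hki]
      have hmeas : ∑ k, v' k * v' k ≤ N := by
        have hdec : ∑ k, v' k * v' k < ∑ k, v k * v k := by
          rw [hsq, Finset.sum_update_of_mem (Finset.mem_univ j),
            Finset.sum_update_of_mem hij',
            Finset.sum_eq_sum_sdiff_singleton_add (Finset.mem_univ j) (fun k => v k * v k),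
            Finset.sum_eq_sum_sdiff_singleton_add hij' (fun k => v k * v k)]
          obtain ⟨k, hk⟩ : ∃ k, v i = v j + 2 + k := ⟨v i - v j - 2, by omega⟩
          have ha' : a = v j + 1 + k := by omega
          have key : b * b + a * a < v j * v j + v i * v i := by
            rw [ha', hbb, hk]; nlinarith
          omega
        omega
      calc ∏ k, v k ≤ ∏ k, v' k := hprod'
        _ ≤ Fprod r (∑ k, v' k) := ih v' hmeas
        _ = Fprod r (∑ k, v k) := by rw [hsum']

/-- The key numeric step: `a · Fprod r d ≤ Fprod (r+1) (a+d)`. -/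
lemma step_bound (r a d : ℕ) (ha : 0 < a) : a * Fprod r d ≤ Fprod (r + 1) (a + d) := by
  rcases Nat.eq_zero_or_pos r with hr | hr
  · subst hr
    have h0 : Fprod 0 d = 1 := by simp [Fprod]
    have h1 : Fprod 1 (a + d) = a + d := by simp [Fprod]
    rw [h0, h1]; omega
  · set q := d / r with hq
    set s := d % r with hs
    have hd : d = r * q + s := (Nat.div_add_mod d r).symm
    have hsr : s < r := Nat.mod_lt d hr
    set v : Fin (r + 1) → ℕ := Fin.cons a (fun i : Fin r => if (i : ℕ) < s then q + 1 else q)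
      with hv
    have hsum : ∑ i, v i = a + d := by
      rw [hv, Fin.sum_cons]
      congr 1
      rw [Fin.sum_univ_eq_sum_range (fun j => if j < s then q + 1 else q) r,
        ite_sum r s q hsr.le]
      omega
    have hprod : ∏ i, v i = a * ((q + 1) ^ s * q ^ (r - s)) := by
      rw [hv, Fin.prod_cons]
      congr 1
      rw [Fin.prod_univ_eq_prod_range (fun j => if j < s then q + 1 else q) r,
        ite_prod r s q hsr.le]
    calc a * Fprod r d = ∏ i, v i := by
          rw [hprod, hd, Fprod_val hr hsr]
      _ ≤ Fprod (r + 1) (∑ i, v i) := compBound _ v le_rfl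
      _ = Fprod (r + 1) (a + d) := by rw [hsum]

section Graph

variable {V : Type*} [Fintype V] [DecidableEq V]

/-- Number of `n`-cliques of `G` inside the vertex set `A`. -/
noncomputable def cCount (G : SimpleGraph V) (n : ℕ) (A : Finset V) : ℕ :=
  ((A.powersetCard n).filter (fun S : Finset V => G.IsClique (S : Set V))).card

/-- Zykov's bound on the number of `r`-cliques inside a set containing no `(r+1)`-clique. -/
lemma zykov (G : SimpleGraph V) (r : ℕ) : ∀ (A : Finset V),
    (∀ S : Finset V, S ⊆ A → G.IsClique (S : Set V) → S.card ≠ r + 1) →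
    cCount G r A ≤ Fprod r A.card := by
  induction r with
  | zero =>
    intro A _
    have h : (A.powersetCard 0).filter (fun S : Finset V => G.IsClique (S : Set V)) = {∅} := by
      ext S
      simp only [Finset.mem_filter, Finset.mem_powersetCard, Finset.card_eq_zero,
        Finset.mem_singleton]
      constructor
      · rintro ⟨⟨-, rfl⟩, -⟩; rfl
      · rintro rfl
        exact ⟨⟨Finset.empty_subset _, rfl⟩, by simp⟩
    simp only [cCount, h, Fprod]
    simp
  | succ r ih =>
    intro A hfree
    rcases A.eq_empty_or_nonempty with rfl | hA
    · have h : cCount G (r + 1) (∅ : Finset V) = 0 := by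
        rw [cCount, Finset.card_eq_zero, Finset.eq_empty_iff_forall_notMem]
        intro S hS
        rw [Finset.mem_filter, Finset.mem_powersetCard] at hS
        have := Finset.subset_empty.mp hS.1.1
        rw [this] at hS
        simp at hS
      rw [h]; exact Nat.zero_le _
    · obtain ⟨v, hvA, hmax⟩ := Finset.exists_max_image A
        (fun u => (A.filter (fun x => G.Adj u x)).card) hA
      set B := A.filter (fun x => G.Adj v x) with hB
      set Δ := B.card with hΔ
      have hvB : v ∉ B := by
        rw [hB, Finset.mem_filter]
        rintro ⟨-, h⟩
        exact G.irrefl h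
      have hBA : B ⊆ A := Finset.filter_subset _ _
      have hΔlt : Δ < A.card := Finset.card_lt_card ⟨hBA, fun h => hvB (h hvA)⟩
      set 𝒮 := (A.powersetCard (r + 1)).filter (fun S : Finset V => G.IsClique (S : Set V)) with hSdef
      have hcover : ∀ S ∈ 𝒮, ∃ u ∈ A \ B, u ∈ S := by
        intro S hS'
        rw [hSdef, Finset.mem_filter, Finset.mem_powersetCard] at hS'
        obtain ⟨⟨hSA, hScard⟩, hSclique⟩ := hS'
        by_contra hcon
        push_neg at hcon
        have hSB : S ⊆ B := by
          intro x hx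
          by_contra hxB
          exact hcon x (Finset.mem_sdiff.mpr ⟨hSA hx, hxB⟩) hx
        have hvS : v ∉ S := fun h' => hvB (hSB h')
        have hclique : G.IsClique ((insert v S : Finset V) : Set V) := by
          rw [Finset.coe_insert]
          refine hSclique.insert (fun x hx _ => ?_)
          have hxB : x ∈ B := hSB hx
          rw [hB, Finset.mem_filter] at hxB
          exact hxB.2
        exact hfree (insert v S) (Finset.insert_subset hvA hSA) hclique
          (by rw [Finset.card_insert_of_notMem hvS, hScard])
      have hsub : 𝒮 ⊆ (A \ B).biUnion (fun u => 𝒮.filter (fun S => u ∈ S)) := by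
        intro S hS'
        obtain ⟨u, hu, huS⟩ := hcover S hS'
        exact Finset.mem_biUnion.mpr ⟨u, hu, Finset.mem_filter.mpr ⟨hS', huS⟩⟩
      have hper : ∀ u ∈ A \ B, (𝒮.filter (fun S => u ∈ S)).card ≤ Fprod r Δ := by
        intro u hu
        have huA : u ∈ A := (Finset.mem_sdiff.mp hu).1
        set Bu := A.filter (fun x => G.Adj u x) with hBu
        have huBu : u ∉ Bu := by
          rw [hBu, Finset.mem_filter]
          rintro ⟨-, h⟩
          exact G.irrefl h
        have h1 : (𝒮.filter (fun S => u ∈ S)).card ≤ cCount G r Bu := by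
          rw [cCount]
          apply Finset.card_le_card_of_injOn (fun S => S.erase u)
          · intro S hS'
            rw [Finset.mem_coe, Finset.mem_filter, hSdef, Finset.mem_filter, Finset.mem_powersetCard] at hS'
            obtain ⟨⟨⟨hSA, hScard⟩, hSclique⟩, huS⟩ := hS'
            rw [Finset.mem_coe, Finset.mem_filter, Finset.mem_powersetCard]
            refine ⟨⟨?_, ?_⟩, ?_⟩
            · intro x hx
              obtain ⟨hxu, hxS⟩ := Finset.mem_erase.mp hx
              rw [hBu, Finset.mem_filter]
              exact ⟨hSA hxS, hSclique (Finset.mem_coe.mpr huS) (Finset.mem_coe.mpr hxS)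
                (Ne.symm hxu)⟩
            · rw [Finset.card_erase_of_mem huS, hScard]
              omega
            · exact hSclique.subset (Finset.coe_subset.mpr (Finset.erase_subset _ _))
          · intro S₁ h₁ S₂ h₂ heq
            have hu₁ : u ∈ S₁ := (Finset.mem_filter.mp h₁).2
            have hu₂ : u ∈ S₂ := (Finset.mem_filter.mp h₂).2
            have heq' : S₁.erase u = S₂.erase u := heq
            rw [← Finset.insert_erase hu₁, ← Finset.insert_erase hu₂, heq']
        have hfree' : ∀ T : Finset V, T ⊆ Bu → G.IsClique (T : Set V) → T.card ≠ r + 1 := by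
          intro T hT hTc hTcard
          have huT : u ∉ T := fun h => huBu (hT h)
          have hclique : G.IsClique ((insert u T : Finset V) : Set V) := by
            rw [Finset.coe_insert]
            refine hTc.insert (fun x hx _ => ?_)
            have := hT hx
            rw [hBu, Finset.mem_filter] at this
            exact this.2
          refine hfree (insert u T) ?_ hclique ?_
          · exact Finset.insert_subset huA (hT.trans (Finset.filter_subset _ _))
          · rw [Finset.card_insert_of_notMem huT, hTcard]
        have h2 : cCount G r Bu ≤ Fprod r Bu.card := ih Bu hfree'
        have h3 : Bu.card ≤ Δ := hmax u huA
        exact h1.trans (h2.trans (Fprod_mono r h3))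
      have hmain : cCount G (r + 1) A ≤ (A.card - Δ) * Fprod r Δ := by
        calc cCount G (r + 1) A = 𝒮.card := rfl
          _ ≤ ((A \ B).biUnion (fun u => 𝒮.filter (fun S => u ∈ S))).card :=
              Finset.card_le_card hsub
          _ ≤ ∑ u ∈ A \ B, (𝒮.filter (fun S => u ∈ S)).card := Finset.card_biUnion_le
          _ ≤ ∑ _u ∈ A \ B, Fprod r Δ := Finset.sum_le_sum hper
          _ = (A \ B).card * Fprod r Δ := by rw [Finset.sum_const, smul_eq_mul]
          _ = (A.card - Δ) * Fprod r Δ := by rw [Finset.card_sdiff_of_subset hBA]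
      calc cCount G (r + 1) A ≤ (A.card - Δ) * Fprod r Δ := hmain
        _ ≤ Fprod (r + 1) ((A.card - Δ) + Δ) := step_bound r _ _ (by omega)
        _ = Fprod (r + 1) A.card := by congr 1; omega

end Graph

lemma ceil_cast (a r : ℕ) (ha : 0 < a) (hr : 0 < r) :
    ⌈(a : ℚ) / (r : ℚ)⌉ = (((a + r - 1) / r : ℕ) : ℤ) := by
  set c := (a + r - 1) / r with hc
  have h3 := Nat.div_add_mod (a + r - 1) r
  have h4 : (a + r - 1) % r < r := Nat.mod_lt _ hr
  rw [← hc] at h3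
  set Q := (a + r - 1) % r with hQ
  set P := r * c with hP
  have hA : a ≤ P := by omega
  have hB : P < a + r := by omega
  have hrQ : (0 : ℚ) < (r : ℚ) := by exact_mod_cast hr
  rw [Int.ceil_eq_iff]
  constructor
  · rw [lt_div_iff₀ hrQ]
    have hB' : (r : ℚ) * (c : ℚ) < (a : ℚ) + (r : ℚ) := by exact_mod_cast hB
    push_cast
    nlinarith
  · rw [div_le_iff₀ hrQ]
    have hA' : (a : ℚ) ≤ (r : ℚ) * (c : ℚ) := by exact_mod_cast hA
    push_cast
    nlinarith

/-- If a graph `H` on at least `s` vertices contains exactly `t` copies of `K_s`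
and some edge `e` such that `H - e` has no copy of `K_s`, then
`t ≤ ∏_{j=0}^{s-3} ⌈(|V(H)| - 2 - j)/(s-2)⌉`. -/
theorem stmt_3 {V : Type*} [Fintype V] (s t : ℕ) (hs : 3 ≤ s)
    (H : SimpleGraph V) (hV : s ≤ Fintype.card V)
    (ht : t = {S : Finset V | S.card = s ∧ H.IsClique (S : Set V)}.ncard)
    (e : Sym2 V) (he : e ∈ H.edgeSet)
    (hdel : {S : Finset V | S.card = s ∧
      (H.deleteEdges {e}).IsClique (S : Set V)} = ∅) :
    (t : ℤ) ≤ ∏ j ∈ Finset.range (s - 2),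
      ⌈((Fintype.card V : ℚ) - 2 - j) / ((s : ℚ) - 2)⌉ := by
  classical
  induction e using Sym2.ind with
  | _ a b =>
  rw [SimpleGraph.mem_edgeSet] at he
  have hab : a ≠ b := he.ne
  set n := Fintype.card V with hn
  set r := s - 2 with hr
  set 𝒯 : Finset (Finset V) :=
    Finset.univ.filter (fun S : Finset V => S.card = s ∧ H.IsClique (S : Set V)) with h𝒯
  have hT : t = 𝒯.card := by
    rw [ht, Set.ncard_eq_toFinset_card', Set.toFinset_setOf]
  have hmem : ∀ S ∈ 𝒯, a ∈ S ∧ b ∈ S := by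
    intro S hS'
    rw [h𝒯, Finset.mem_filter] at hS'
    obtain ⟨-, hcard, hclique⟩ := hS'
    by_contra hcon
    have hmem' : S ∈ {S : Finset V | S.card = s ∧
        (H.deleteEdges {s(a, b)}).IsClique (S : Set V)} := by
      refine ⟨hcard, ?_⟩
      intro x hx y hy hxy
      rw [SimpleGraph.deleteEdges_adj]
      refine ⟨hclique hx hy hxy, ?_⟩
      rw [Set.mem_singleton_iff, Sym2.eq_iff]
      rintro (⟨rfl, rfl⟩ | ⟨rfl, rfl⟩)
      · exact hcon ⟨Finset.mem_coe.mp hx, Finset.mem_coe.mp hy⟩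
      · exact hcon ⟨Finset.mem_coe.mp hy, Finset.mem_coe.mp hx⟩
    rw [hdel] at hmem'
    exact hmem'
  set A : Finset V := Finset.univ.filter (fun x => H.Adj a x ∧ H.Adj b x) with hA
  have haA : a ∉ A := by
    rw [hA, Finset.mem_filter]
    rintro ⟨-, h, -⟩
    exact H.irrefl h
  have hbA : b ∉ A := by
    rw [hA, Finset.mem_filter]
    rintro ⟨-, -, h⟩
    exact H.irrefl h
  have hTcount : 𝒯.card ≤ cCount H r A := by
    rw [cCount]
    apply Finset.card_le_card_of_injOn (fun S => (S.erase a).erase b)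
    · intro S hS'
      obtain ⟨haS, hbS⟩ := hmem S hS'
      rw [Finset.mem_coe, h𝒯, Finset.mem_filter] at hS'
      obtain ⟨-, hcard, hclique⟩ := hS'
      rw [Finset.mem_coe, Finset.mem_filter, Finset.mem_powersetCard]
      have hbS' : b ∈ S.erase a := Finset.mem_erase.mpr ⟨Ne.symm hab, hbS⟩
      refine ⟨⟨?_, ?_⟩, ?_⟩
      · intro x hx
        obtain ⟨hxb, hx'⟩ := Finset.mem_erase.mp hx
        obtain ⟨hxa, hxS⟩ := Finset.mem_erase.mp hx'
        rw [hA, Finset.mem_filter]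
        exact ⟨Finset.mem_univ _,
          hclique (Finset.mem_coe.mpr haS) (Finset.mem_coe.mpr hxS) (Ne.symm hxa),
          hclique (Finset.mem_coe.mpr hbS) (Finset.mem_coe.mpr hxS) (Ne.symm hxb)⟩
      · rw [Finset.card_erase_of_mem hbS', Finset.card_erase_of_mem haS, hcard]
        omega
      · exact hclique.subset (Finset.coe_subset.mpr
          ((Finset.erase_subset _ _).trans (Finset.erase_subset _ _)))
    · intro S₁ h₁ S₂ h₂ heq
      obtain ⟨ha₁, hb₁⟩ := hmem S₁ h₁
      obtain ⟨ha₂, hb₂⟩ := hmem S₂ h₂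
      have key : ∀ S : Finset V, a ∈ S → b ∈ S →
          insert a (insert b ((S.erase a).erase b)) = S := by
        intro S haS hbS
        rw [Finset.insert_erase (Finset.mem_erase.mpr ⟨Ne.symm hab, hbS⟩),
          Finset.insert_erase haS]
      have heq' : (S₁.erase a).erase b = (S₂.erase a).erase b := heq
      rw [← key S₁ ha₁ hb₁, ← key S₂ ha₂ hb₂, heq']
  have hAfree : ∀ T : Finset V, T ⊆ A → H.IsClique (T : Set V) → T.card ≠ r + 1 := by
    intro T hTA hTc hTcard
    have haT : a ∉ T := fun h => haA (hTA h)
    have hbT : b ∉ T := fun h => hbA (hTA h)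
    have hclique : H.IsClique ((insert a T : Finset V) : Set V) := by
      rw [Finset.coe_insert]
      refine hTc.insert (fun x hx _ => ?_)
      have := hTA hx
      rw [hA, Finset.mem_filter] at this
      exact this.2.1
    have hmem' : insert a T ∈ {S : Finset V | S.card = s ∧
        (H.deleteEdges {s(a, b)}).IsClique (S : Set V)} := by
      refine ⟨by rw [Finset.card_insert_of_notMem haT, hTcard]; omega, ?_⟩
      intro x hx y hy hxy
      rw [SimpleGraph.deleteEdges_adj]
      refine ⟨hclique hx hy hxy, ?_⟩
      rw [Set.mem_singleton_iff, Sym2.eq_iff]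
      have hbmem : b ∉ (insert a T : Finset V) := by
        rw [Finset.mem_insert]
        rintro (h | h)
        · exact hab h.symm
        · exact hbT h
      rintro (⟨rfl, rfl⟩ | ⟨rfl, rfl⟩)
      · exact hbmem (Finset.mem_coe.mp hy)
      · exact hbmem (Finset.mem_coe.mp hx)
    rw [hdel] at hmem'
    exact hmem'
  have hAcard : A.card ≤ n - 2 := by
    have h1 : A ⊆ (Finset.univ.erase a).erase b := by
      intro x hx
      rw [Finset.mem_erase, Finset.mem_erase]
      exact ⟨fun hxb => hbA (hxb ▸ hx), fun hxa => haA (hxa ▸ hx), Finset.mem_univ x⟩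
    calc A.card ≤ ((Finset.univ.erase a).erase b).card := Finset.card_le_card h1
      _ = n - 2 := by
          rw [Finset.card_erase_of_mem
            (Finset.mem_erase.mpr ⟨Ne.symm hab, Finset.mem_univ b⟩),
            Finset.card_erase_of_mem (Finset.mem_univ a), Finset.card_univ, ← hn]
          omega
  have hmain : t ≤ Fprod r (n - 2) := by
    rw [hT]
    exact hTcount.trans ((zykov H r A hAfree).trans (Fprod_mono r hAcard))
  have hrpos : 0 < r := by omega
  have hfinal : ((Fprod r (n - 2) : ℕ) : ℤ) =
      ∏ j ∈ Finset.range r, ⌈((n : ℚ) - 2 - j) / ((s : ℚ) - 2)⌉ := by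
    rw [Fprod, Nat.cast_prod]
    refine Finset.prod_congr rfl (fun j hj => ?_)
    rw [Finset.mem_range] at hj
    have haj : 0 < n - 2 - j := by omega
    have e1 : ((n : ℚ) - 2 - j) = ((n - 2 - j : ℕ) : ℚ) := by
      rw [Nat.cast_sub (by omega), Nat.cast_sub (by omega)]
      push_cast
      ring
    have e2 : ((s : ℚ) - 2) = ((r : ℕ) : ℚ) := by
      rw [hr, Nat.cast_sub (by omega)]
      push_cast
      ring
    rw [e1, e2, ceil_cast _ _ haj hrpos,
      show n - 2 - j + (r - 1) = n - 2 - j + r - 1 from by omega]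
  rw [← hfinal]
  exact_mod_cast hmain
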